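/- Let (S, 𝒮, μ) be a space with μ(S) finite, and ξ a random measure on S that is μ-swap-invariant under a probability measure P with E_P ξ(S) ∈ (0, ∞). Define Q by dQ/dP = ξ(S)/E_P ξ(S) and η = ξ/ξ(S) on {ξ(S) > 0}, η = 0 on {ξ(S) = 0}. Then η is μ-exchangeable under Q and ξ = ξ(S)·η holds. -/

import Mathlib

open MeasureTheory
open scoped ENNReal

/-- `μ`-swap-invariance of a random measure. -/
def SwapInvariant {Ω S : Type*} [MeasurableSpace Ω] [MeasurableSpace S]
    (P : Measure Ω) (μ : Measure S) (ξ : Ω → Measure S) : Prop :=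
  ∀ (n : ℕ) (u : Fin n → ℝ) (A B : Fin n → Set S),
    (∀ i, MeasurableSet (A i)) → (∀ i, MeasurableSet (B i)) →
    Pairwise (Function.onFun Disjoint A) → Pairwise (Function.onFun Disjoint B) →
    (∀ i, μ (A i) = μ (B i)) →
    (∀ i, ∫⁻ ω, ξ ω (A i) ∂P ≠ ⊤) → (∀ i, ∫⁻ ω, ξ ω (B i) ∂P ≠ ⊤) →
    ∫ ω, |∑ i, u i * (ξ ω (A i)).toReal| ∂P =
      ∫ ω, |∑ i, u i * (ξ ω (B i)).toReal| ∂P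

/-- `μ`-exchangeability of a random measure: equal finite-dimensional
distributions over disjoint families with equal `μ`-measures. -/
def ExchangeableRM {Ω S : Type*} [MeasurableSpace Ω] [MeasurableSpace S]
    (P : Measure Ω) (μ : Measure S) (ξ : Ω → Measure S) : Prop :=
  ∀ (n : ℕ) (A B : Fin n → Set S),
    (∀ i, MeasurableSet (A i)) → (∀ i, MeasurableSet (B i)) →
    Pairwise (Function.onFun Disjoint A) → Pairwise (Function.onFun Disjoint B) →
    (∀ i, μ (A i) = μ (B i)) →
    P.map (fun ω => fun i => ξ ω (A i)) = P.map (fun ω => fun i => ξ ω (B i))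


open intervalIntegral in
lemma aux_taylor (φ φ' φ'' : ℝ → ℝ)
    (h1 : ∀ z, HasDerivAt φ (φ' z) z) (h2 : ∀ z, HasDerivAt φ' (φ'' z) z)
    (hc : Continuous φ'') {a b z : ℝ} (hz : z ∈ Set.Icc a b) :
    φ z = φ a + φ' a * (z - a) + ∫ s in a..b, max (z - s) 0 * φ'' s := by
  obtain ⟨haz, hzb⟩ := hz
  have hab : a ≤ b := haz.trans hzb
  have hc' : Continuous φ' := continuous_iff_continuousAt.2 fun x => (h2 x).continuousAt
  have hcont : Continuous fun s => max (z - s) 0 * φ'' s :=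
    (((continuous_const.sub continuous_id).max continuous_const).mul hc)
  have hsplit : ∫ s in a..b, max (z - s) 0 * φ'' s
      = (∫ s in a..z, max (z - s) 0 * φ'' s) + ∫ s in z..b, max (z - s) 0 * φ'' s :=
    (integral_add_adjacent_intervals (hcont.intervalIntegrable _ _) (hcont.intervalIntegrable _ _)).symm
  have hright : (∫ s in z..b, max (z - s) 0 * φ'' s) = 0 := by
    rw [intervalIntegral.integral_congr (g := fun _ => 0)]
    · simp
    · intro s hs
      rw [Set.uIcc_of_le hzb] at hs
      have : z - s ≤ 0 := by linarith [hs.1]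
      simp [max_eq_right this]
  have hleft : (∫ s in a..z, max (z - s) 0 * φ'' s) = ∫ s in a..z, (z - s) * φ'' s := by
    apply intervalIntegral.integral_congr
    intro s hs
    rw [Set.uIcc_of_le haz] at hs
    have : (0:ℝ) ≤ z - s := by linarith [hs.2]
    simp [max_eq_left this]
  have e1 : ∫ s in a..z, φ'' s = φ' z - φ' a :=
    integral_eq_sub_of_hasDerivAt (fun x _ => h2 x) (hc.intervalIntegrable _ _)
  have e2 : ∫ s in a..z, φ' s = φ z - φ a :=
    integral_eq_sub_of_hasDerivAt (fun x _ => h1 x) (hc'.intervalIntegrable _ _)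
  have e3 : ∫ s in a..z, s * φ'' s
      = z * φ' z - a * φ' a - ∫ s in a..z, 1 * φ' s := by
    exact intervalIntegral.integral_mul_deriv_eq_deriv_mul (u := fun s => s) (u' := fun _ => 1)
      (v := φ') (v' := φ'') (fun x _ => hasDerivAt_id' x) (fun x _ => h2 x)
      (continuous_const.intervalIntegrable _ _) (hc.intervalIntegrable _ _)
  have e4 : ∫ s in a..z, (z - s) * φ'' s
      = z * (φ' z - φ' a) - (z * φ' z - a * φ' a - (φ z - φ a)) := by
    have : ∀ s, (z - s) * φ'' s = z * φ'' s - s * φ'' s := fun s => by ring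
    simp_rw [this]
    rw [intervalIntegral.integral_sub (f := fun s => z * φ'' s) (g := fun s => s * φ'' s) ((continuous_const.mul hc).intervalIntegrable _ _)
      ((continuous_id'.mul hc).intervalIntegrable _ _),
      intervalIntegral.integral_const_mul, e1, e3]
    simp_rw [one_mul]
    rw [e2]
  rw [hsplit, hright, hleft, e4]
  ring

lemma aux_phi {Ω : Type*} [MeasurableSpace Ω] (Q : Measure Ω) [IsProbabilityMeasure Q]
    (Z W : Ω → ℝ) (hZ : Measurable Z) (hW : Measurable W) (M : ℝ)
    (hZb : ∀ ω, |Z ω| ≤ M) (hWb : ∀ ω, |W ω| ≤ M)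
    (Habs : ∀ t : ℝ, ∫ ω, |Z ω + t| ∂Q = ∫ ω, |W ω + t| ∂Q)
    (φ φ' φ'' : ℝ → ℝ)
    (h1 : ∀ z, HasDerivAt φ (φ' z) z) (h2 : ∀ z, HasDerivAt φ' (φ'' z) z)
    (hc : Continuous φ'') (C : ℝ) (hC : ∀ s, |φ'' s| ≤ C) :
    ∫ ω, φ (Z ω) ∂Q = ∫ ω, φ (W ω) ∂Q := by
  have hne : Nonempty Ω := by
    rcases isEmpty_or_nonempty Ω with h | h
    · exfalso
      have h1' : Q Set.univ = 1 := measure_univ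
      rw [Set.univ_eq_empty_iff.2 h, measure_empty] at h1'
      exact zero_ne_one h1'
    · exact h
  obtain ⟨ω₀⟩ := hne
  have hM : 0 ≤ M := le_trans (abs_nonneg _) (hZb ω₀)
  set a : ℝ := -(M+1) with ha
  set b : ℝ := M+1 with hb
  have hab : a ≤ b := by simp [ha, hb]; linarith
  -- integrability of bounded measurable functions
  have intbd : ∀ (K : ℝ) (g : Ω → ℝ), Measurable g → (∀ ω, |g ω| ≤ K) → Integrable g Q := by
    intro K g hg hK
    exact ⟨hg.aestronglyMeasurable,
      HasFiniteIntegral.of_bounded (C := K) (Filter.Eventually.of_forall fun ω => by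
        simpa using hK ω)⟩
  have intZ : Integrable Z Q := intbd M Z hZ hZb
  have intW : Integrable W Q := intbd M W hW hWb
  -- equal means
  have mean : ∫ ω, Z ω ∂Q = ∫ ω, W ω ∂Q := by
    have eZ : ∫ ω, |Z ω + (M+1)| ∂Q = (∫ ω, Z ω ∂Q) + (M+1) := by
      have : (fun ω => |Z ω + (M+1)|) = fun ω => Z ω + (M+1) := by
        funext ω
        have := abs_le.1 (hZb ω)
        exact abs_of_nonneg (by linarith [this.1])
      rw [this, integral_add intZ (integrable_const _), MeasureTheory.integral_const]
      simp
    have eW : ∫ ω, |W ω + (M+1)| ∂Q = (∫ ω, W ω ∂Q) + (M+1) := by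
      have : (fun ω => |W ω + (M+1)|) = fun ω => W ω + (M+1) := by
        funext ω
        have := abs_le.1 (hWb ω)
        exact abs_of_nonneg (by linarith [this.1])
      rw [this, integral_add intW (integrable_const _), MeasureTheory.integral_const]
      simp
    have := Habs (M+1)
    rw [eZ, eW] at this
    linarith
  -- equal positive parts
  have pos : ∀ s : ℝ, ∫ ω, max (Z ω - s) 0 ∂Q = ∫ ω, max (W ω - s) 0 ∂Q := by
    intro s
    have key : ∀ (V : Ω → ℝ), Measurable V → (∀ ω, |V ω| ≤ M) →
        ∫ ω, max (V ω - s) 0 ∂Q = ((∫ ω, V ω ∂Q) - s + ∫ ω, |V ω + (-s)| ∂Q) / 2 := by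
      intro V hV hVb
      have intV : Integrable V Q := intbd M V hV hVb
      have idmax : (fun ω => max (V ω - s) 0)
          = fun ω => ((V ω - s) + |V ω + (-s)|) / 2 := by
        funext ω
        have h' : |V ω + (-s)| = |V ω - s| := by ring_nf
        rw [h']
        rcases le_total (V ω - s) 0 with h | h
        · rw [max_eq_right h, abs_of_nonpos h]; ring
        · rw [max_eq_left h, abs_of_nonneg h]; ring
      rw [idmax]
      rw [MeasureTheory.integral_div]
      congr 1
      have intabs : Integrable (fun ω => |V ω + (-s)|) Q := by
        refine intbd (M + |s|) _ ((hV.add_const _).abs) fun ω => ?_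
        rw [abs_abs]
        calc |V ω + (-s)| ≤ |V ω| + |(-s)| := abs_add_le _ _
        _ ≤ M + |s| := by simp [abs_neg]; linarith [hVb ω]
      have iVs : Integrable (fun ω => V ω - s) Q := intV.sub (integrable_const _)
      rw [integral_add iVs intabs,
        integral_sub intV (integrable_const _), MeasureTheory.integral_const]
      simp
    rw [key Z hZ hZb, key W hW hWb, mean, Habs (-s)]
  -- main formula for each variable
  have key : ∀ (V : Ω → ℝ), Measurable V → (∀ ω, |V ω| ≤ M) →
      ∫ ω, φ (V ω) ∂Q = φ a + φ' a * ((∫ ω, V ω ∂Q) - a)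
        + ∫ s in Set.Ioc a b, (∫ ω, max (V ω - s) 0 ∂Q) * φ'' s := by
    intro V hV hVb
    have intV : Integrable V Q := intbd M V hV hVb
    have hφc : Continuous φ := continuous_iff_continuousAt.2 fun x => (h1 x).continuousAt
    have hmem : ∀ ω, V ω ∈ Set.Icc a b := fun ω => by
      have := abs_le.1 (hVb ω)
      constructor <;> [skip; skip] <;> simp [ha, hb] <;> linarith [this.1, this.2]
    have taylor : ∀ ω, φ (V ω) = φ a + φ' a * (V ω - a)
        + ∫ s in a..b, max (V ω - s) 0 * φ'' s :=
      fun ω => aux_taylor φ φ' φ'' h1 h2 hc (hmem ω)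
    set R : Ω → ℝ := fun ω => φ (V ω) - φ a - φ' a * (V ω - a) with hR
    have hRint : ∀ ω, R ω = ∫ s in a..b, max (V ω - s) 0 * φ'' s := by
      intro ω; rw [hR]; simp only []; rw [taylor ω]; ring
    -- bound on φ on the interval
    obtain ⟨C₀, hC₀⟩ : ∃ C₀, ∀ x ∈ Set.Icc a b, ‖φ x‖ ≤ C₀ :=
      (isCompact_Icc).exists_bound_of_continuousOn hφc.continuousOn
    have hRmeas : Measurable R :=
      ((hφc.measurable.comp hV).sub measurable_const).sub
        (measurable_const.mul (hV.sub measurable_const))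
    have hRbd : ∀ ω, |R ω| ≤ C₀ + |φ a| + |φ' a| * (b - a) := by
      intro ω
      have h1' : |φ (V ω)| ≤ C₀ := by simpa using hC₀ _ (hmem ω)
      have h2' : |V ω - a| ≤ b - a := by
        have := hmem ω
        rw [abs_le]; constructor <;> [linarith [this.1]; linarith [this.2]]
      calc |R ω| ≤ |φ (V ω)| + |φ a| + |φ' a * (V ω - a)| := by
            rw [hR]; simp only []
            calc |φ (V ω) - φ a - φ' a * (V ω - a)|
                ≤ |φ (V ω) - φ a| + |φ' a * (V ω - a)| := abs_sub _ _
            _ ≤ (|φ (V ω)| + |φ a|) + |φ' a * (V ω - a)| := by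
                  gcongr; exact abs_sub _ _
        _ ≤ C₀ + |φ a| + |φ' a| * (b - a) := by
            rw [abs_mul]
            have := abs_nonneg (φ' a)
            gcongr
    have intR : Integrable R Q := intbd _ R hRmeas hRbd
    -- split the integral
    have split : ∫ ω, φ (V ω) ∂Q = φ a + φ' a * ((∫ ω, V ω ∂Q) - a) + ∫ ω, R ω ∂Q := by
      have : (fun ω => φ (V ω)) = fun ω => (φ a + φ' a * (V ω - a)) + R ω := by
        funext ω; rw [hR]; simp only []; ring
      have i1 : Integrable (fun ω => φ a + φ' a * (V ω - a)) Q :=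
        (integrable_const _).add ((intV.sub (integrable_const _)).const_mul _)
      have i2 : Integrable (fun ω => φ' a * (V ω - a)) Q :=
        (intV.sub (integrable_const _)).const_mul _
      have i3 : ∫ ω, φ' a * (V ω - a) ∂Q = φ' a * ((∫ ω, V ω ∂Q) - a) := by
        rw [MeasureTheory.integral_const_mul]
        congr 1
        rw [integral_sub intV (integrable_const _), MeasureTheory.integral_const]
        simp
      rw [this, integral_add i1 intR, integral_add (integrable_const _) i2, i3,
        MeasureTheory.integral_const]
      simp
    rw [split]
    congr 1
    -- Fubini
    have hRint' : ∀ ω, R ω = ∫ s in Set.Ioc a b, max (V ω - s) 0 * φ'' s := by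
      intro ω; rw [hRint ω, intervalIntegral.integral_of_le hab]
    have hfmeas : Measurable (Function.uncurry fun (ω : Ω) (s : ℝ) => max (V ω - s) 0 * φ'' s) :=
      (((hV.comp measurable_fst).sub measurable_snd).max measurable_const).mul
        (hc.measurable.comp measurable_snd)
    have hprodfin : IsFiniteMeasure (volume.restrict (Set.Ioc a b)) := by
      constructor
      rw [Measure.restrict_apply_univ]
      exact measure_Ioc_lt_top
    have hae : ∀ᵐ p ∂(Q.prod (volume.restrict (Set.Ioc a b))), p.2 ∈ Set.Ioc a b := by
      rw [MeasureTheory.ae_iff]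
      have hset : {p : Ω × ℝ | ¬ p.2 ∈ Set.Ioc a b} = Set.univ ×ˢ (Set.Ioc a b)ᶜ := by
        ext p; simp
      rw [hset, Measure.prod_prod, Measure.restrict_apply measurableSet_Ioc.compl]
      simp
    have hCnn : 0 ≤ C := le_trans (abs_nonneg _) (hC 0)
    have hint2 : Integrable (Function.uncurry fun (ω : Ω) (s : ℝ) => max (V ω - s) 0 * φ'' s)
        (Q.prod (volume.restrict (Set.Ioc a b))) := by
      refine ⟨hfmeas.aestronglyMeasurable,
        HasFiniteIntegral.of_bounded (C := (2*M+1) * C) ?_⟩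
      filter_upwards [hae] with p hp
      have h1' : |max (V p.1 - p.2) 0| ≤ 2*M+1 := by
        rw [abs_of_nonneg (le_max_right _ _)]
        rcases le_total (V p.1 - p.2) 0 with h | h
        · rw [max_eq_right h]; linarith
        · rw [max_eq_left h]
          have hv := abs_le.1 (hVb p.1)
          have hs := hp.1
          simp only [ha] at hs
          linarith [hv.2]
      have h2' := hC p.2
      calc ‖max (V p.1 - p.2) 0 * φ'' p.2‖ = |max (V p.1 - p.2) 0| * |φ'' p.2| := abs_mul _ _
      _ ≤ (2*M+1) * C := by
          apply mul_le_mul h1' h2' (abs_nonneg _)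
          linarith
    calc ∫ ω, R ω ∂Q
        = ∫ ω, ∫ s, max (V ω - s) 0 * φ'' s ∂(volume.restrict (Set.Ioc a b)) ∂Q :=
          integral_congr_ae (Filter.Eventually.of_forall fun ω => hRint' ω)
      _ = ∫ s, ∫ ω, max (V ω - s) 0 * φ'' s ∂Q ∂(volume.restrict (Set.Ioc a b)) :=
          integral_integral_swap hint2
      _ = ∫ s in Set.Ioc a b, (∫ ω, max (V ω - s) 0 ∂Q) * φ'' s :=
          integral_congr_ae (Filter.Eventually.of_forall fun s => integral_mul_const _ _)
  rw [key Z hZ hZb, key W hW hWb, mean]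
  simp_rw [pos]

lemma aux_master {Ω : Type*} [MeasurableSpace Ω] (Q : Measure Ω) [IsProbabilityMeasure Q]
    {n : ℕ} (X Y : Fin n → Ω → ℝ)
    (hX : ∀ i, Measurable (X i)) (hY : ∀ i, Measurable (Y i))
    (hXb : ∀ i ω, X i ω ∈ Set.Icc (0:ℝ) 1) (hYb : ∀ i ω, Y i ω ∈ Set.Icc (0:ℝ) 1)
    (H : ∀ (u : Fin n → ℝ) (t : ℝ),
      ∫ ω, |∑ i, u i * X i ω + t| ∂Q = ∫ ω, |∑ i, u i * Y i ω + t| ∂Q) :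
    Q.map (fun ω i => X i ω) = Q.map (fun ω i => Y i ω) := by
  -- the trig moment equalities
  have trig : ∀ u : Fin n → ℝ,
      (∫ ω, Real.cos (∑ i, u i * X i ω) ∂Q = ∫ ω, Real.cos (∑ i, u i * Y i ω) ∂Q) ∧
      (∫ ω, Real.sin (∑ i, u i * X i ω) ∂Q = ∫ ω, Real.sin (∑ i, u i * Y i ω) ∂Q) := by
    intro u
    have hZm : Measurable fun ω => ∑ i, u i * X i ω :=
      Finset.measurable_sum _ fun i _ => (hX i).const_mul _
    have hWm : Measurable fun ω => ∑ i, u i * Y i ω :=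
      Finset.measurable_sum _ fun i _ => (hY i).const_mul _
    have hbd : ∀ (V : Fin n → Ω → ℝ), (∀ i ω, V i ω ∈ Set.Icc (0:ℝ) 1) →
        ∀ ω, |∑ i, u i * V i ω| ≤ ∑ i, |u i| := by
      intro V hV ω
      calc |∑ i, u i * V i ω| ≤ ∑ i, |u i * V i ω| := Finset.abs_sum_le_sum_abs _ _
      _ ≤ ∑ i, |u i| := by
          apply Finset.sum_le_sum
          intro i _
          rw [abs_mul]
          have h1 := (hV i ω).1
          have h2 := (hV i ω).2
          have : |V i ω| ≤ 1 := by rw [abs_le]; constructor <;> linarith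
          calc |u i| * |V i ω| ≤ |u i| * 1 := by
                exact mul_le_mul_of_nonneg_left this (abs_nonneg _)
          _ = |u i| := mul_one _
    constructor
    · exact aux_phi Q _ _ hZm hWm (∑ i, |u i|) (hbd X hXb) (hbd Y hYb) (H u)
        Real.cos (fun z => -Real.sin z) (fun z => -Real.cos z)
        (fun z => Real.hasDerivAt_cos z) (fun z => (Real.hasDerivAt_sin z).neg)
        (Real.continuous_cos.neg) 1
        (fun s => by rw [abs_neg]; exact Real.abs_cos_le_one s)
    · exact aux_phi Q _ _ hZm hWm (∑ i, |u i|) (hbd X hXb) (hbd Y hYb) (H u)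
        Real.sin Real.cos (fun z => -Real.sin z)
        (fun z => Real.hasDerivAt_sin z) (fun z => Real.hasDerivAt_cos z)
        (Real.continuous_sin.neg) 1
        (fun s => by rw [abs_neg]; exact Real.abs_sin_le_one s)
  -- the compact cube
  set K : Set (Fin n → ℝ) := Set.Icc 0 1 with hK
  have hKcomp : IsCompact K := isCompact_Icc
  haveI : CompactSpace K := isCompact_iff_compactSpace.mp hKcomp
  have hmemX : ∀ ω, (fun i => X i ω) ∈ K := by
    intro ω
    constructor <;> intro i <;> [exact (hXb i ω).1; exact (hXb i ω).2]
  have hmemY : ∀ ω, (fun i => Y i ω) ∈ K := by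
    intro ω
    constructor <;> intro i <;> [exact (hYb i ω).1; exact (hYb i ω).2]
  set Xh : Ω → K := fun ω => ⟨fun i => X i ω, hmemX ω⟩ with hXh
  set Yh : Ω → K := fun ω => ⟨fun i => Y i ω, hmemY ω⟩ with hYh
  have hgX : Measurable fun ω => (fun i => X i ω) := measurable_pi_lambda _ hX
  have hgY : Measurable fun ω => (fun i => Y i ω) := measurable_pi_lambda _ hY
  have hXhm : Measurable Xh := hgX.subtype_mk
  have hYhm : Measurable Yh := hgY.subtype_mk
  -- continuous linear forms on K
  have contlin : ∀ u : Fin n → ℝ, Continuous fun k : K => ∑ i, u i * (k : Fin n → ℝ) i :=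
    fun u => continuous_finset_sum _ fun i _ =>
      continuous_const.mul ((continuous_apply i).comp continuous_subtype_val)
  set cMap : (Fin n → ℝ) → C(K, ℝ) :=
    fun u => ⟨fun k => Real.cos (∑ i, u i * (k : Fin n → ℝ) i),
      Real.continuous_cos.comp (contlin u)⟩ with hcMap
  set sMap : (Fin n → ℝ) → C(K, ℝ) :=
    fun u => ⟨fun k => Real.sin (∑ i, u i * (k : Fin n → ℝ) i),
      Real.continuous_sin.comp (contlin u)⟩ with hsMap
  set G : Set C(K, ℝ) := {F | ∃ u : Fin n → ℝ, F = cMap u ∨ F = sMap u} with hG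
  set V : Submodule ℝ C(K, ℝ) := Submodule.span ℝ G with hV
  -- integrability of continuous test functions
  have intF : ∀ (F : C(K, ℝ)) (T : Ω → K), Measurable T → Integrable (fun ω => F (T ω)) Q := by
    intro F T hT
    refine ⟨(F.continuous.measurable.comp hT).aestronglyMeasurable,
      HasFiniteIntegral.of_bounded (C := ‖F‖) (Filter.Eventually.of_forall fun ω => ?_)⟩
    exact F.norm_coe_le_norm (T ω)
  -- the integral-equality property
  set Pg : C(K, ℝ) → Prop := fun F => ∫ ω, F (Xh ω) ∂Q = ∫ ω, F (Yh ω) ∂Q with hPg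
  have PG : ∀ F ∈ G, Pg F := by
    rintro F ⟨u, hu | hu⟩ <;> subst hu <;> simp only [hPg, hcMap, hsMap, ContinuousMap.coe_mk]
    · exact (trig u).1
    · exact (trig u).2
  have PV : ∀ F ∈ V, Pg F := by
    intro F hF
    induction hF using Submodule.span_induction with
    | mem x h => exact PG x h
    | zero => simp [hPg]
    | add x y hx hy px py =>
        simp only [hPg, ContinuousMap.add_apply]
        rw [integral_add (intF x Xh hXhm) (intF y Xh hXhm),
          integral_add (intF x Yh hYhm) (intF y Yh hYhm), px, py]
    | smul a x hx px =>
        simp only [hPg, ContinuousMap.smul_apply, smul_eq_mul]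
        rw [MeasureTheory.integral_const_mul, MeasureTheory.integral_const_mul, px]
  -- V is closed under multiplication
  have sum_add : ∀ (u v : Fin n → ℝ) (k : K),
      (∑ i, (u + v) i * (k : Fin n → ℝ) i)
        = (∑ i, u i * (k : Fin n → ℝ) i) + ∑ i, v i * (k : Fin n → ℝ) i := by
    intro u v k
    rw [← Finset.sum_add_distrib]
    congr 1; funext i; simp [add_mul]
  have sum_sub : ∀ (u v : Fin n → ℝ) (k : K),
      (∑ i, (u - v) i * (k : Fin n → ℝ) i)
        = (∑ i, u i * (k : Fin n → ℝ) i) - ∑ i, v i * (k : Fin n → ℝ) i := by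
    intro u v k
    rw [← Finset.sum_sub_distrib]
    congr 1; funext i; simp [sub_mul]
  have mulGG : ∀ f ∈ G, ∀ g ∈ G, f * g ∈ V := by
    rintro f ⟨u, hu | hu⟩ g ⟨v, hv | hv⟩ <;> subst hu <;> subst hv
    · -- cos * cos
      have : cMap u * cMap v = (1/2 : ℝ) • cMap (u - v) + (1/2 : ℝ) • cMap (u + v) := by
        ext k
        simp only [ContinuousMap.mul_apply, ContinuousMap.add_apply, ContinuousMap.smul_apply,
          hcMap, ContinuousMap.coe_mk, smul_eq_mul, sum_add, sum_sub, Real.cos_add, Real.cos_sub]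
        ring
      rw [this]
      exact V.add_mem (V.smul_mem _ (Submodule.subset_span ⟨u - v, Or.inl rfl⟩))
        (V.smul_mem _ (Submodule.subset_span ⟨u + v, Or.inl rfl⟩))
    · -- cos * sin
      have : cMap u * sMap v = (1/2 : ℝ) • sMap (u + v) - (1/2 : ℝ) • sMap (u - v) := by
        ext k
        simp only [ContinuousMap.mul_apply, ContinuousMap.sub_apply, ContinuousMap.smul_apply,
          hcMap, hsMap, ContinuousMap.coe_mk, smul_eq_mul, sum_add, sum_sub,
          Real.sin_add, Real.sin_sub]
        ring
      rw [this]
      exact V.sub_mem (V.smul_mem _ (Submodule.subset_span ⟨u + v, Or.inr rfl⟩))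
        (V.smul_mem _ (Submodule.subset_span ⟨u - v, Or.inr rfl⟩))
    · -- sin * cos
      have : sMap u * cMap v = (1/2 : ℝ) • sMap (u + v) + (1/2 : ℝ) • sMap (u - v) := by
        ext k
        simp only [ContinuousMap.mul_apply, ContinuousMap.add_apply, ContinuousMap.smul_apply,
          hcMap, hsMap, ContinuousMap.coe_mk, smul_eq_mul, sum_add, sum_sub,
          Real.sin_add, Real.sin_sub]
        ring
      rw [this]
      exact V.add_mem (V.smul_mem _ (Submodule.subset_span ⟨u + v, Or.inr rfl⟩))
        (V.smul_mem _ (Submodule.subset_span ⟨u - v, Or.inr rfl⟩))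
    · -- sin * sin
      have : sMap u * sMap v = (1/2 : ℝ) • cMap (u - v) - (1/2 : ℝ) • cMap (u + v) := by
        ext k
        simp only [ContinuousMap.mul_apply, ContinuousMap.sub_apply, ContinuousMap.smul_apply,
          hcMap, hsMap, ContinuousMap.coe_mk, smul_eq_mul, sum_add, sum_sub,
          Real.cos_add, Real.cos_sub]
        ring
      rw [this]
      exact V.sub_mem (V.smul_mem _ (Submodule.subset_span ⟨u - v, Or.inl rfl⟩))
        (V.smul_mem _ (Submodule.subset_span ⟨u + v, Or.inl rfl⟩))
  have mulV : ∀ p ∈ V, ∀ q ∈ V, p * q ∈ V := by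
    intro p hp
    induction hp using Submodule.span_induction with
    | mem x h =>
        intro q hq
        induction hq using Submodule.span_induction with
        | mem y h' => exact mulGG x h y h'
        | zero => rw [mul_zero]; exact V.zero_mem
        | add y z hy hz py pz => rw [mul_add]; exact V.add_mem py pz
        | smul a y hy py => rw [mul_smul_comm]; exact V.smul_mem _ py
    | zero => intro q hq; rw [zero_mul]; exact V.zero_mem
    | add x y hx hy px py => intro q hq; rw [add_mul]; exact V.add_mem (px q hq) (py q hq)
    | smul a x hx px => intro q hq; rw [smul_mul_assoc]; exact V.smul_mem _ (px q hq)
  have oneV : (1 : C(K, ℝ)) ∈ V := by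
    have : (1 : C(K, ℝ)) = cMap 0 := by
      ext k
      simp [hcMap]
    rw [this]
    exact Submodule.subset_span ⟨0, Or.inl rfl⟩
  -- the subalgebra generated by G
  set A : Subalgebra ℝ C(K, ℝ) := Algebra.adjoin ℝ G with hA
  have hAV : ∀ F ∈ A, F ∈ V := by
    intro F hF
    induction hF using Algebra.adjoin_induction with
    | mem x h => exact Submodule.subset_span h
    | algebraMap r =>
        rw [Algebra.algebraMap_eq_smul_one]
        exact V.smul_mem _ oneV
    | add x y hx hy px py => exact V.add_mem px py
    | mul x y hx hy px py => exact mulV x px y py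
  have PA : ∀ F ∈ A, Pg F := fun F hF => PV F (hAV F hF)
  -- A separates points
  have hsep : A.SeparatesPoints := by
    intro x y hxy
    have hne : (x : Fin n → ℝ) ≠ (y : Fin n → ℝ) := fun h => hxy (Subtype.ext h)
    obtain ⟨i, hi⟩ := Function.ne_iff.1 hne
    refine ⟨_, ⟨sMap (Pi.single i 1), ?_, rfl⟩, ?_⟩
    · exact Algebra.subset_adjoin ⟨Pi.single i 1, Or.inr rfl⟩
    · have hform : ∀ k : K, sMap (Pi.single i 1) k = Real.sin ((k : Fin n → ℝ) i) := by
        intro k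
        simp only [hsMap, ContinuousMap.coe_mk]
        congr 1
        rw [Finset.sum_eq_single i]
        · simp
        · intro j _ hj; simp [Pi.single_apply, hj]
        · intro h; exact absurd (Finset.mem_univ i) h
      show sMap (Pi.single i 1) x ≠ sMap (Pi.single i 1) y
      rw [hform, hform]
      intro hcon
      apply hi
      have hpi : (1:ℝ) ≤ Real.pi / 2 := by
        have := Real.pi_gt_three
        linarith
      have hmem : ∀ z : K, (z : Fin n → ℝ) i ∈ Set.Icc (-(Real.pi/2)) (Real.pi/2) := by
        intro z
        have h1 := z.2.1 i
        have h2 := z.2.2 i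
        simp only [Pi.zero_apply] at h1
        simp only [Pi.one_apply] at h2
        constructor <;> [linarith; linarith]
      exact Real.injOn_sin (hmem x) (hmem y) hcon
  -- every continuous test function has equal integrals
  have master : ∀ F : C(K, ℝ), Pg F := by
    intro F
    have key : ∀ ε : ℝ, 0 < ε →
        |(∫ ω, F (Xh ω) ∂Q) - ∫ ω, F (Yh ω) ∂Q| ≤ 2 * ε := by
      intro ε hε
      obtain ⟨g, hg⟩ :=
        ContinuousMap.exists_mem_subalgebra_near_continuousMap_of_separatesPoints A hsep F ε hε
      have hgP : Pg (g : C(K, ℝ)) := PA _ g.2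
      have hclose : ∀ (T : Ω → K), Measurable T →
          |(∫ ω, F (T ω) ∂Q) - ∫ ω, (g : C(K, ℝ)) (T ω) ∂Q| ≤ ε := by
        intro T hT
        rw [← integral_sub (intF F T hT) (intF _ T hT)]
        have : ‖∫ ω, (F (T ω) - (g : C(K, ℝ)) (T ω)) ∂Q‖ ≤ ε * (Q Set.univ).toReal := by
          apply norm_integral_le_of_norm_le_const
          apply Filter.Eventually.of_forall
          intro ω
          have := ContinuousMap.norm_coe_le_norm ((g : C(K, ℝ)) - F) (T ω)
          rw [ContinuousMap.sub_apply] at this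
          calc ‖F (T ω) - (g : C(K, ℝ)) (T ω)‖
              = ‖(g : C(K, ℝ)) (T ω) - F (T ω)‖ := by rw [norm_sub_rev]
          _ ≤ ‖(g : C(K, ℝ)) - F‖ := this
          _ ≤ ε := le_of_lt hg
        simpa [Real.norm_eq_abs] using this
      calc |(∫ ω, F (Xh ω) ∂Q) - ∫ ω, F (Yh ω) ∂Q|
          ≤ |(∫ ω, F (Xh ω) ∂Q) - ∫ ω, (g : C(K, ℝ)) (Xh ω) ∂Q|
            + |(∫ ω, (g : C(K, ℝ)) (Yh ω) ∂Q) - ∫ ω, F (Yh ω) ∂Q| := by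
            have : (∫ ω, F (Xh ω) ∂Q) - ∫ ω, F (Yh ω) ∂Q
                = ((∫ ω, F (Xh ω) ∂Q) - ∫ ω, (g : C(K, ℝ)) (Xh ω) ∂Q)
                  + ((∫ ω, (g : C(K, ℝ)) (Yh ω) ∂Q) - ∫ ω, F (Yh ω) ∂Q) := by
              rw [hgP]; ring
            rw [this]
            exact abs_add_le _ _
      _ ≤ ε + ε := by
            gcongr
            · exact hclose Xh hXhm
            · rw [abs_sub_comm]; exact hclose Yh hYhm
      _ = 2 * ε := by ring
    by_contra hcon
    have hpos : 0 < |(∫ ω, F (Xh ω) ∂Q) - ∫ ω, F (Yh ω) ∂Q| := by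
      rw [abs_pos, sub_ne_zero]
      exact hcon
    have := key (|(∫ ω, F (Xh ω) ∂Q) - ∫ ω, F (Yh ω) ∂Q| / 4) (by linarith)
    linarith
  -- conclude via bounded continuous functions
  haveI h1 : IsProbabilityMeasure (Q.map fun ω i => X i ω) :=
    Measure.isProbabilityMeasure_map hgX.aemeasurable
  apply ext_of_forall_lintegral_eq_of_IsFiniteMeasure
  intro f
  have hfm : Measurable fun x : Fin n → ℝ => (f x : ENNReal) :=
    measurable_coe_nnreal_ennreal.comp f.continuous.measurable
  rw [lintegral_map hfm hgX, lintegral_map hfm hgY]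
  set F : C(K, ℝ) := ⟨fun k => (f (k : Fin n → ℝ) : ℝ),
    NNReal.continuous_coe.comp (f.continuous.comp continuous_subtype_val)⟩ with hF
  have hintX : Integrable (fun ω => F (Xh ω)) Q := intF F Xh hXhm
  have hintY : Integrable (fun ω => F (Yh ω)) Q := intF F Yh hYhm
  have eX : (∫⁻ ω, ((f (fun i => X i ω) : NNReal) : ENNReal) ∂Q)
      = ENNReal.ofReal (∫ ω, F (Xh ω) ∂Q) :=
    lintegral_coe_eq_integral (fun ω => f (fun i => X i ω)) hintX
  have eY : (∫⁻ ω, ((f (fun i => Y i ω) : NNReal) : ENNReal) ∂Q)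
      = ENNReal.ofReal (∫ ω, F (Yh ω) ∂Q) :=
    lintegral_coe_eq_integral (fun ω => f (fun i => Y i ω)) hintY
  refine Eq.trans ?_ eY.symm
  exact eX.trans (by rw [master F])

/-- A swap-invariant random measure on a space of finite measure equals its
total mass times a random measure that is exchangeable after a change of
probability measure with density `ξ(S)/E ξ(S)`. -/
theorem stmt_8 {Ω S : Type*} [MeasurableSpace Ω] [MeasurableSpace S]
    (P : Measure Ω) [IsProbabilityMeasure P] (μ : Measure S)
    (hμfin : μ Set.univ ≠ ⊤)
    (ξ : Ω → Measure S) (hξ : Measurable ξ)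
    (hsw : SwapInvariant P μ ξ)
    (h0 : ∫⁻ ω, ξ ω Set.univ ∂P ≠ 0) (hfin : ∫⁻ ω, ξ ω Set.univ ∂P ≠ ⊤)
    (Q : Measure Ω)
    (hQ : Q = P.withDensity (fun ω => ξ ω Set.univ / ∫⁻ ω', ξ ω' Set.univ ∂P))
    (η : Ω → Measure S)
    (hη : ∀ ω, η ω = if ξ ω Set.univ = 0 then 0 else (ξ ω Set.univ)⁻¹ • ξ ω) :
    ExchangeableRM Q μ η ∧ ∀ᵐ ω ∂P, (ξ ω Set.univ) • η ω = ξ ω := by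
  set c : ℝ≥0∞ := ∫⁻ ω, ξ ω Set.univ ∂P with hc
  have hmB : ∀ {B : Set S}, MeasurableSet B → Measurable fun ω => ξ ω B :=
    fun hB => (Measure.measurable_coe hB).comp hξ
  have hmT : Measurable fun ω => ξ ω Set.univ := hmB MeasurableSet.univ
  have haefin : ∀ᵐ ω ∂P, ξ ω Set.univ < ⊤ := ae_lt_top hmT hfin
  -- second conjunct
  have conj2 : ∀ᵐ ω ∂P, (ξ ω Set.univ) • η ω = ξ ω := by
    filter_upwards [haefin] with ω hω
    rw [hη ω]
    by_cases h : ξ ω Set.univ = 0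
    · rw [if_pos h, smul_zero]
      exact (Measure.measure_univ_eq_zero.mp h).symm
    · rw [if_neg h, smul_smul, ENNReal.mul_inv_cancel h hω.ne, one_smul]
  -- basic properties of η
  have hη_le_one : ∀ ω (B : Set S), η ω B ≤ 1 := by
    intro ω B
    rw [hη ω]
    by_cases h : ξ ω Set.univ = 0
    · simp [h]
    · rw [if_neg h, Measure.smul_apply, smul_eq_mul]
      calc (ξ ω Set.univ)⁻¹ * ξ ω B ≤ (ξ ω Set.univ)⁻¹ * ξ ω Set.univ :=
            mul_le_mul_right (measure_mono (Set.subset_univ _)) _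
      _ ≤ 1 := by
          by_cases htop : ξ ω Set.univ = ⊤
          · simp [htop]
          · rw [ENNReal.inv_mul_cancel h htop]
  have hη_ne_top : ∀ ω (B : Set S), η ω B ≠ ⊤ :=
    fun ω B => (lt_of_le_of_lt (hη_le_one ω B) ENNReal.one_lt_top).ne
  have hηmeas : ∀ {B : Set S}, MeasurableSet B → Measurable fun ω => η ω B := by
    intro B hB
    have hrw : (fun ω => η ω B)
        = fun ω => if ξ ω Set.univ = 0 then 0 else (ξ ω Set.univ)⁻¹ * ξ ω B := by
      funext ω
      rw [hη ω]
      split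
      · simp
      · rw [Measure.smul_apply, smul_eq_mul]
    rw [hrw]
    exact Measurable.ite (hmT (measurableSet_singleton 0)) measurable_const
      (hmT.inv.mul (hmB hB))
  -- Q is a probability measure
  haveI hQprob : IsProbabilityMeasure Q := by
    constructor
    rw [hQ, withDensity_apply _ MeasurableSet.univ, Measure.restrict_univ]
    simp_rw [div_eq_mul_inv]
    rw [lintegral_mul_const _ hmT, ← hc, ENNReal.mul_inv_cancel h0 hfin]
  have hcR : 0 < c.toReal := ENNReal.toReal_pos h0 hfin
  -- bridge: Q-expectations in terms of P-expectations
  have bridge : ∀ (m : ℕ) (A : Fin m → Set S), (∀ i, MeasurableSet (A i)) →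
      ∀ (u : Fin m → ℝ) (t : ℝ),
      ∫ ω, |∑ i, u i * (η ω (A i)).toReal + t| ∂Q
        = (c.toReal)⁻¹ * ∫ ω, |∑ i, u i * (ξ ω (A i)).toReal
            + t * (ξ ω Set.univ).toReal| ∂P := by
    intro m A hA u t
    set d : Ω → NNReal := fun ω => (ξ ω Set.univ / c).toNNReal with hd
    have hdmeas : Measurable d := (hmT.div measurable_const).ennreal_toNNReal
    have hQd : Q = P.withDensity (fun ω => (d ω : ℝ≥0∞)) := by
      rw [hQ]
      apply withDensity_congr_ae
      filter_upwards [haefin] with ω hω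
      exact (ENNReal.coe_toNNReal (ENNReal.div_lt_top hω.ne h0).ne).symm
    rw [hQd, integral_withDensity_eq_integral_smul hdmeas, ← MeasureTheory.integral_const_mul]
    apply integral_congr_ae
    filter_upwards [haefin] with ω hω
    have hdR : (d ω : ℝ) = (ξ ω Set.univ).toReal / c.toReal := by
      rw [hd]
      simp only [ENNReal.coe_toNNReal_eq_toReal]
      rw [ENNReal.toReal_div]
    by_cases h : ξ ω Set.univ = 0
    · have hAi : ∀ i, ξ ω (A i) = 0 := fun i =>
        le_antisymm (le_trans (measure_mono (Set.subset_univ _)) (le_of_eq h)) zero_le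
      have hηAi : ∀ i, η ω (A i) = 0 := by
        intro i; rw [hη ω, if_pos h]; rfl
      have hd0 : (d ω : ℝ) = 0 := by rw [hdR, h]; simp
      rw [NNReal.smul_def, hd0, zero_smul, h]
      simp [hAi]
    · set T : ℝ := (ξ ω Set.univ).toReal with hT
      have hTpos : 0 < T := ENNReal.toReal_pos h hω.ne
      have hexp : ∀ i, (η ω (A i)).toReal = (ξ ω (A i)).toReal / T := by
        intro i
        rw [hη ω, if_neg h, Measure.smul_apply, smul_eq_mul, ENNReal.toReal_mul,
          ENNReal.toReal_inv, ← hT, div_eq_inv_mul]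
      have hsum : ∑ i, u i * (η ω (A i)).toReal = (∑ i, u i * (ξ ω (A i)).toReal) / T := by
        rw [Finset.sum_div]
        exact Finset.sum_congr rfl fun i _ => by rw [hexp i, mul_div_assoc]
      rw [NNReal.smul_def, smul_eq_mul, hdR, hsum]
      have habs : |∑ i, u i * (ξ ω (A i)).toReal + t * T|
          = T * |(∑ i, u i * (ξ ω (A i)).toReal) / T + t| := by
        have hmul : T * ((∑ i, u i * (ξ ω (A i)).toReal) / T + t)
            = (∑ i, u i * (ξ ω (A i)).toReal) + t * T := by
          field_simp
        rw [← hmul, abs_mul, abs_of_pos hTpos]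
      rw [habs]
      ring
  -- the transformation of the swapped families
  have transform : ∀ (m : ℕ) (u : Fin m → ℝ) (t : ℝ) (C : Fin m → Set S),
      (∀ i, MeasurableSet (C i)) → Pairwise (Function.onFun Disjoint C) →
      ∫ ω, |∑ i, (Fin.snoc (fun j => u j + t) t : Fin (m+1) → ℝ) i
          * (ξ ω ((Fin.snoc C (Set.univ \ ⋃ k, C k) : Fin (m+1) → Set S) i)).toReal| ∂P
        = ∫ ω, |∑ i, u i * (ξ ω (C i)).toReal + t * (ξ ω Set.univ).toReal| ∂P := by
    intro m u t C hC hdC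
    apply integral_congr_ae
    filter_upwards [haefin] with ω hω
    congr 1
    rw [Fin.sum_univ_castSucc]
    simp only [Fin.snoc_castSucc, Fin.snoc_last]
    have h2 : ∀ D : Set S, ξ ω D ≠ ⊤ :=
      fun D => ne_top_of_le_ne_top hω.ne (measure_mono (Set.subset_univ _))
    have hTsum : (ξ ω Set.univ).toReal
        = (∑ i, (ξ ω (C i)).toReal) + (ξ ω (Set.univ \ ⋃ k, C k)).toReal := by
      have hadd : ξ ω (⋃ k, C k) + ξ ω (Set.univ \ ⋃ k, C k) = ξ ω Set.univ := by
        rw [measure_add_diff (MeasurableSet.iUnion fun j => hC j).nullMeasurableSet Set.univ, Set.union_univ]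
      have hU : ξ ω (⋃ k, C k) = ∑ i, ξ ω (C i) := by
        rw [measure_iUnion hdC hC, tsum_fintype]
      rw [← hadd, hU, ENNReal.toReal_add (by
          exact (ENNReal.sum_lt_top.mpr (fun i _ => (h2 (C i)).lt_top)).ne) (h2 _),
        ENNReal.toReal_sum (fun i _ => h2 (C i))]
    rw [hTsum]
    have hdist : ∑ i, (u i + t) * (ξ ω (C i)).toReal
        = (∑ i, u i * (ξ ω (C i)).toReal) + t * ∑ i, (ξ ω (C i)).toReal := by
      rw [Finset.mul_sum, ← Finset.sum_add_distrib]
      exact Finset.sum_congr rfl fun i _ => by ring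
    rw [hdist]
    ring
  -- disjointness of the augmented families
  have hdisj : ∀ (m : ℕ) (C : Fin m → Set S), Pairwise (Function.onFun Disjoint C) →
      Pairwise (Function.onFun Disjoint (Fin.snoc C (Set.univ \ ⋃ i, C i) : Fin (m+1) → Set S)) := by
    intro m C hdC
    have main : ∀ (i j : Fin (m+1)), i ≠ j →
        Disjoint ((Fin.snoc C (Set.univ \ ⋃ k, C k) : Fin (m+1) → Set S) i)
          ((Fin.snoc C (Set.univ \ ⋃ k, C k) : Fin (m+1) → Set S) j) := by
      intro i j
      induction i using Fin.lastCases with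
      | last =>
        induction j using Fin.lastCases with
        | last => intro h; exact absurd rfl h
        | cast j' =>
            intro _
            rw [Fin.snoc_last, Fin.snoc_castSucc]
            exact disjoint_sdiff_self_left.mono_right (Set.subset_iUnion C j')
      | cast i' =>
        induction j using Fin.lastCases with
        | last =>
            intro _
            rw [Fin.snoc_castSucc, Fin.snoc_last]
            exact disjoint_sdiff_self_right.mono_left (Set.subset_iUnion C i')
        | cast j' =>
            intro hne
            rw [Fin.snoc_castSucc, Fin.snoc_castSucc]
            exact hdC fun h => hne (congrArg Fin.castSucc h)
    exact fun i j hij => main i j hij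
  -- the swap of P-expectations
  have swap : ∀ (m : ℕ) (A B : Fin m → Set S), (∀ i, MeasurableSet (A i)) →
      (∀ i, MeasurableSet (B i)) → Pairwise (Function.onFun Disjoint A) → Pairwise (Function.onFun Disjoint B) →
      (∀ i, μ (A i) = μ (B i)) → ∀ (u : Fin m → ℝ) (t : ℝ),
      ∫ ω, |∑ i, u i * (ξ ω (A i)).toReal + t * (ξ ω Set.univ).toReal| ∂P
        = ∫ ω, |∑ i, u i * (ξ ω (B i)).toReal + t * (ξ ω Set.univ).toReal| ∂P := by
    intro m A B hA hB hdA hdB hμAB u t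
    have hmeas' : ∀ (C : Fin m → Set S), (∀ i, MeasurableSet (C i)) →
        ∀ i, MeasurableSet ((Fin.snoc C (Set.univ \ ⋃ k, C k) : Fin (m+1) → Set S) i) := by
      intro C hC i
      induction i using Fin.lastCases with
      | last =>
          rw [Fin.snoc_last]
          exact MeasurableSet.univ.diff (MeasurableSet.iUnion fun j => hC j)
      | cast i' =>
          rw [Fin.snoc_castSucc]
          exact hC i'
    have hμU : μ (⋃ i, A i) = μ (⋃ i, B i) := by
      rw [measure_iUnion hdA hA, measure_iUnion hdB hB, tsum_fintype, tsum_fintype]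
      exact Finset.sum_congr rfl fun i _ => hμAB i
    have hμ' : ∀ i, μ ((Fin.snoc A (Set.univ \ ⋃ k, A k) : Fin (m+1) → Set S) i)
        = μ ((Fin.snoc B (Set.univ \ ⋃ k, B k) : Fin (m+1) → Set S) i) := by
      intro i
      induction i using Fin.lastCases with
      | last =>
          rw [Fin.snoc_last, Fin.snoc_last,
            measure_diff (Set.subset_univ _)
              ((MeasurableSet.iUnion fun j => hA j).nullMeasurableSet)
              (ne_top_of_le_ne_top hμfin (measure_mono (Set.subset_univ _))),
            measure_diff (Set.subset_univ _)
              ((MeasurableSet.iUnion fun j => hB j).nullMeasurableSet)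
              (ne_top_of_le_ne_top hμfin (measure_mono (Set.subset_univ _))), hμU]
      | cast i' =>
          rw [Fin.snoc_castSucc, Fin.snoc_castSucc]
          exact hμAB i'
    have hfin' : ∀ (C : Fin (m+1) → Set S) (i : Fin (m+1)), (∫⁻ ω, ξ ω (C i) ∂P) ≠ ⊤ :=
      fun C i => ne_top_of_le_ne_top hfin
        (lintegral_mono fun ω => measure_mono (Set.subset_univ _))
    have hres := hsw (m+1) (Fin.snoc (fun j => u j + t) t)
      (Fin.snoc A (Set.univ \ ⋃ k, A k)) (Fin.snoc B (Set.univ \ ⋃ k, B k))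
      (hmeas' A hA) (hmeas' B hB) (hdisj m A hdA) (hdisj m B hdB) hμ'
      (hfin' _) (hfin' _)
    rw [transform m u t A hA hdA, transform m u t B hB hdB] at hres
    exact hres
  -- conclusion
  refine ⟨?_, conj2⟩
  intro n A B hA hB hdA hdB hμAB
  have hXmeas : ∀ i, Measurable fun ω => (η ω (A i)).toReal :=
    fun i => (hηmeas (hA i)).ennreal_toReal
  have hYmeas : ∀ i, Measurable fun ω => (η ω (B i)).toReal :=
    fun i => (hηmeas (hB i)).ennreal_toReal
  have hbound : ∀ (C : Set S) ω, (η ω C).toReal ∈ Set.Icc (0:ℝ) 1 := by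
    intro C ω
    constructor
    · exact ENNReal.toReal_nonneg
    · have := ENNReal.toReal_mono ENNReal.one_ne_top (hη_le_one ω C)
      simpa using this
  have mapeq := aux_master Q (fun i ω => (η ω (A i)).toReal) (fun i ω => (η ω (B i)).toReal)
    hXmeas hYmeas (fun i ω => hbound (A i) ω) (fun i ω => hbound (B i) ω)
    (fun u t => by
      rw [bridge n A hA u t, bridge n B hB u t, swap n A B hA hB hdA hdB hμAB u t])
  have hh : Measurable fun (v : Fin n → ℝ) (i : Fin n) => ENNReal.ofReal (v i) :=
    measurable_pi_lambda _ fun i => ENNReal.measurable_ofReal.comp (measurable_pi_apply i)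
  have hgA : Measurable fun ω (i : Fin n) => (η ω (A i)).toReal :=
    measurable_pi_lambda _ hXmeas
  have hgB : Measurable fun ω (i : Fin n) => (η ω (B i)).toReal :=
    measurable_pi_lambda _ hYmeas
  have keyA : (fun ω => fun i => η ω (A i))
      = (fun (v : Fin n → ℝ) (i : Fin n) => ENNReal.ofReal (v i))
        ∘ (fun ω i => (η ω (A i)).toReal) := by
    funext ω
    funext i
    exact (ENNReal.ofReal_toReal (hη_ne_top ω (A i))).symm
  have keyB : (fun ω => fun i => η ω (B i))
      = (fun (v : Fin n → ℝ) (i : Fin n) => ENNReal.ofReal (v i))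
        ∘ (fun ω i => (η ω (B i)).toReal) := by
    funext ω
    funext i
    exact (ENNReal.ofReal_toReal (hη_ne_top ω (B i))).symm
  rw [keyA, keyB, ← Measure.map_map hh hgA, ← Measure.map_map hh hgB, mapeq]
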